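/- Let G be a locally compact Hausdorff topological group acting continuously and properly on a locally compact Hausdorff space M, and suppose the orbit space M/G is compact. Consider the stabiliser bundle Stab(M) = {(m, h) ∈ M × G : h • m = m}, equipped with the G-action x • (m, h) = (x • m, x h x⁻¹) for x ∈ G. Then the orbit space Stab(M)/G is compact. -/

import Mathlib

/-- In a cocompact action on a locally compact space, there is a compact set meeting
every orbit. -/
theorem exists_compact_smul_cover
    {G M : Type*} [Group G] [TopologicalSpace G]
    [TopologicalSpace M] [LocallyCompactSpace M]
    [MulAction G M] [ContinuousSMul G M]
    (hcocompact : CompactSpace (Quotient (MulAction.orbitRel G M))) :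
    ∃ K : Set M, IsCompact K ∧ ∀ m : M, ∃ x : G, x • m ∈ K := by
  classical
  have hopen : IsOpenMap (Quotient.mk (MulAction.orbitRel G M)) :=
    isOpenMap_quotient_mk'_mul
  choose K hKc hKn using fun m : M => exists_compact_mem_nhds m
  have hcover : Set.univ ⊆ ⋃ m : M,
      Quotient.mk (MulAction.orbitRel G M) '' interior (K m) := by
    rintro q -
    obtain ⟨m, rfl⟩ := Quotient.mk_surjective q
    exact Set.mem_iUnion.mpr ⟨m, ⟨m, mem_interior_iff_mem_nhds.mpr (hKn m), rfl⟩⟩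
  obtain ⟨s, hs⟩ := isCompact_univ.elim_finite_subcover
    (fun m : M => Quotient.mk (MulAction.orbitRel G M) '' interior (K m))
    (fun m => hopen _ isOpen_interior) hcover
  refine ⟨⋃ m ∈ s, K m, s.isCompact_biUnion fun m _ => hKc m, fun m => ?_⟩
  have := hs (Set.mem_univ (Quotient.mk (MulAction.orbitRel G M) m))
  simp only [Set.mem_iUnion, Set.mem_image] at this
  obtain ⟨i, hi, m', hm', hq⟩ := this
  obtain ⟨x, hx⟩ := Quotient.exact hq
  refine ⟨x, Set.mem_biUnion hi ?_⟩
  have hx' : x • m = m' := hx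
  rw [hx']
  exact interior_subset hm'

/-- For a continuous proper action of a locally compact Hausdorff group `G`
on a locally compact Hausdorff space `M` with compact orbit space `M/G`, the stabiliser
bundle `Stab(M) = {(m, h) ∈ M × G | h • m = m}`, with the `G`-action
`x • (m, h) = (x • m, x h x⁻¹)`, has compact orbit space `Stab(M)/G`. -/
theorem stabiliser_bundle_quotient_compact
    {G M : Type*} [Group G] [TopologicalSpace G] [IsTopologicalGroup G]
    [LocallyCompactSpace G] [T2Space G]
    [TopologicalSpace M] [LocallyCompactSpace M] [T2Space M]
    [MulAction G M] [ContinuousSMul G M]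
    (hproper : IsProperMap (fun p : G × M => (p.1 • p.2, p.2)))
    (hcocompact : CompactSpace (Quotient (MulAction.orbitRel G M))) :
    CompactSpace (Quot (fun p q : {p : M × G // p.2 • p.1 = p.1} =>
      ∃ x : G, x • (p : M × G).1 = (q : M × G).1 ∧
        x * (p : M × G).2 * x⁻¹ = (q : M × G).2)) := by
  obtain ⟨K, hKc, hKcov⟩ := exists_compact_smul_cover hcocompact
  set St := {p : M × G // p.2 • p.1 = p.1}
  set r := fun p q : St =>
      ∃ x : G, x • (p : M × G).1 = (q : M × G).1 ∧
        x * (p : M × G).2 * x⁻¹ = (q : M × G).2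
  -- the compact preimage under the proper map
  have hC : IsCompact ((fun p : G × M => (p.1 • p.2, p.2)) ⁻¹' (K ×ˢ K)
      ∩ {p : G × M | p.1 • p.2 = p.2}) := by
    refine (hproper.isCompact_preimage (hKc.prod hKc)).inter_right ?_
    exact isClosed_eq (continuous_fst.smul continuous_snd) continuous_snd
  -- the corresponding compact set in M × G
  have hC' : IsCompact {p : M × G | p.2 • p.1 = p.1 ∧ p.1 ∈ K} := by
    have : {p : M × G | p.2 • p.1 = p.1 ∧ p.1 ∈ K} =
        Prod.swap '' ((fun p : G × M => (p.1 • p.2, p.2)) ⁻¹' (K ×ˢ K)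
          ∩ {p : G × M | p.1 • p.2 = p.2}) := by
      ext ⟨m, h⟩
      constructor
      · rintro ⟨h1, h2⟩
        exact ⟨(h, m), ⟨by simpa [h1] using h2, h1⟩, rfl⟩
      · rintro ⟨⟨h', m'⟩, ⟨hmem1, heq⟩, hswap⟩
        cases hswap
        exact ⟨heq, heq ▸ hmem1.1⟩
    rw [this]
    exact hC.image continuous_swap
  -- the compact set in the subtype
  have hA : IsCompact {p : St | (p : M × G).1 ∈ K} := by
    rw [Topology.IsEmbedding.subtypeVal.isCompact_iff]
    have : Subtype.val '' {p : St | (p : M × G).1 ∈ K} =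
        {p : M × G | p.2 • p.1 = p.1 ∧ p.1 ∈ K} := by
      ext p
      constructor
      · rintro ⟨⟨q, hq⟩, hmem, rfl⟩; exact ⟨hq, hmem⟩
      · rintro ⟨h1, h2⟩; exact ⟨⟨p, h1⟩, h2, rfl⟩
    rw [this]; exact hC'
  -- image covers the quotient
  rw [← isCompact_univ_iff]
  have : Set.univ = Quot.mk r '' {p : St | (p : M × G).1 ∈ K} := by
    apply Set.eq_of_subset_of_subset _ (Set.subset_univ _)
    rintro q -
    obtain ⟨⟨⟨m, h⟩, hstab⟩, rfl⟩ := Quot.exists_rep q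
    obtain ⟨x, hx⟩ := hKcov m
    refine ⟨⟨(x • m, x * h * x⁻¹), ?_⟩, hx, ?_⟩
    · show (x * h * x⁻¹) • (x • m) = x • m
      rw [smul_smul, mul_assoc, inv_mul_cancel, mul_one, mul_smul]
      rw [show h • m = m from hstab]
    · exact Quot.sound ⟨x⁻¹, by simp [smul_smul], by group⟩
  rw [this]
  exact hA.image (continuous_quot_mk)
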